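/- arXiv:1302.0543 — 3 statements merged into one kernel-verified Lean document; each statement's English description precedes it below -/
import Mathlib

section
/- Let G be a group and let x, y, z ∈ G satisfy xz = zx, yz = zy, and xy = yxz. Suppose ≤ is a relation on G that is reflexive (u ≤ u for all u), total (for all u, v: u ≤ v or v ≤ u), transitive (u ≤ v and v ≤ w imply u ≤ w), right-invariant (u ≤ v implies uw ≤ vw for all w), and satisfies the Archimedean property for z: for every u ∈ G there exists k = k(u) ∈ ℤ with z^k ≤ u ≤ z^(k+1). Then the relation ≤ is trivial: u ≤ v for all u, v ∈ G. -/
/-- A reflexive, total, transitive, right-invariant relation on a group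
containing elements `x y z` with the Heisenberg relations, satisfying the
Archimedean property with respect to `z`, is trivial. -/
theorem heisenberg_order_trivial {G : Type*} [Group G] (x y z : G)
    (hxz : x * z = z * x) (hyz : y * z = z * y) (hxy : x * y = y * x * z)
    (le : G → G → Prop)
    (hrefl : ∀ u, le u u)
    (htotal : ∀ u v, le u v ∨ le v u)
    (htrans : ∀ u v w, le u v → le v w → le u w)
    (hrinv : ∀ u v w, le u v → le (u * w) (v * w))
    (harch : ∀ u : G, ∃ k : ℤ, le (z ^ k) u ∧ le u (z ^ (k + 1))) :
    ∀ u v : G, le u v := by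
  have cxz : Commute x z := hxz
  have cyz : Commute y z := hyz
  have hcx : ∀ k : ℤ, x * z ^ k = z ^ k * x := fun k => (cxz.zpow_right k)
  have hcy : ∀ k : ℤ, y * z ^ k = z ^ k * y := fun k => (cyz.zpow_right k)
  -- heights add under products when z commutes with the right factor
  have key : ∀ (u v : G) (A B a b : ℤ), (∀ k : ℤ, v * z ^ k = z ^ k * v) →
      le (z ^ A) u → le u (z ^ B) → le (z ^ a) v → le v (z ^ b) →
      le (z ^ (A + a)) (u * v) ∧ le (u * v) (z ^ (B + b)) := by
    intro u v A B a b hc h1 h2 h3 h4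
    constructor
    · have e1 : le (z ^ a * z ^ A) (v * z ^ A) := hrinv _ _ _ h3
      rw [← zpow_add, hc] at e1
      have e2 : le (z ^ A * v) (u * v) := hrinv _ _ _ h1
      have : a + A = A + a := by ring
      rw [this] at e1
      exact htrans _ _ _ e1 e2
    · have e1 : le (u * v) (z ^ B * v) := hrinv _ _ _ h2
      rw [← hc] at e1
      have e2 : le (v * z ^ B) (z ^ b * z ^ B) := hrinv _ _ _ h4
      rw [← zpow_add] at e2
      have : b + B = B + b := by ring
      rw [this] at e2
      exact htrans _ _ _ e1 e2
  obtain ⟨α, hxl, hxu⟩ := harch x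
  obtain ⟨β, hyl, hyu⟩ := harch y
  -- bounds on cubes
  have bx2 := key x x α (α+1) α (α+1) hcx hxl hxu hxl hxu
  have bx3 := key (x*x) x (α+α) ((α+1)+(α+1)) α (α+1) hcx bx2.1 bx2.2 hxl hxu
  have by2 := key y y β (β+1) β (β+1) hcy hyl hyu hyl hyu
  have by3 := key (y*y) y (β+β) ((β+1)+(β+1)) β (β+1) hcy by2.1 by2.2 hyl hyu
  set X := x*x*x with hX
  set Y := y*y*y with hY
  have hcX : ∀ k : ℤ, X * z ^ k = z ^ k * X := fun k =>
    (((cxz.mul_left cxz).mul_left cxz).zpow_right k)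
  have hcY : ∀ k : ℤ, Y * z ^ k = z ^ k * Y := fun k =>
    (((cyz.mul_left cyz).mul_left cyz).zpow_right k)
  have bXY := key X Y (α+α+α) ((α+1)+(α+1)+(α+1)) (β+β+β) ((β+1)+(β+1)+(β+1))
    hcY bx3.1 bx3.2 by3.1 by3.2
  have bYX := key Y X (β+β+β) ((β+1)+(β+1)+(β+1)) (α+α+α) ((α+1)+(α+1)+(α+1))
    hcX by3.1 by3.2 bx3.1 bx3.2
  have hcz : ∀ k : ℤ, z ^ (9:ℤ) * z ^ k = z ^ k * z ^ (9:ℤ) := fun k => by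
    rw [← zpow_add, ← zpow_add, add_comm]
  have bYXZ := key (Y*X) (z ^ (9:ℤ)) _ _ 9 9 hcz bYX.1 bYX.2 (hrefl _) (hrefl _)
  -- the Heisenberg identity on cubes
  have idA : ∀ n : ℕ, x * y ^ n = y ^ n * x * z ^ n := by
    intro n
    induction n with
    | zero => simp
    | succ n ih =>
      rw [pow_succ, ← mul_assoc, ih, pow_succ z]
      have : x * z ^ n = z ^ n * x := (cxz.pow_right n)
      calc y ^ n * x * z ^ n * y = y ^ n * x * (z ^ n * y) := by group
        _ = y ^ n * x * (y * z ^ n) := by rw [(cyz.pow_right n).eq]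
        _ = y ^ n * (x * y) * z ^ n := by group
        _ = y ^ n * (y * x * z) * z ^ n := by rw [hxy]
        _ = y ^ n * y * x * (z ^ n * z) := by
              rw [((Commute.refl z).pow_left n).eq]; group
  have idB : ∀ m n : ℕ, x ^ m * y ^ n = y ^ n * x ^ m * z ^ (m * n) := by
    intro m n
    induction m with
    | zero => simp
    | succ m ih =>
      calc x ^ (m+1) * y ^ n = x ^ m * (x * y ^ n) := by rw [pow_succ]; group
        _ = x ^ m * y ^ n * (x * z ^ n) := by rw [idA n]; group
        _ = y ^ n * x ^ m * z ^ (m*n) * (x * z ^ n) := by rw [ih]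
        _ = y ^ n * x ^ m * (z ^ (m*n) * x) * z ^ n := by group
        _ = y ^ n * x ^ m * (x * z ^ (m*n)) * z ^ n := by
              rw [(cxz.pow_right (m*n)).eq]
        _ = y ^ n * x ^ (m+1) * z ^ (m*n + n) := by rw [pow_succ, pow_add]; group
        _ = y ^ n * x ^ (m+1) * z ^ ((m+1)*n) := by rw [Nat.succ_mul]
  have id9 : X * Y = Y * X * z ^ (9:ℤ) := by
    have h := idB 3 3
    have e1 : x ^ (3:ℕ) = X := by rw [hX, pow_succ, pow_succ, pow_one]
    have e2 : y ^ (3:ℕ) = Y := by rw [hY, pow_succ, pow_succ, pow_one]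
    have e3 : z ^ ((3*3 : ℕ)) = z ^ (9:ℤ) := by
      rw [show (9:ℤ) = ((3*3 : ℕ) : ℤ) by norm_num, zpow_natCast]
    rw [e1, e2, e3] at h
    exact h
  -- shift lemma for z-powers
  have hshift : ∀ a b c : ℤ, le (z ^ a) (z ^ b) → le (z ^ (a+c)) (z ^ (b+c)) := by
    intro a b c h
    have := hrinv _ _ (z ^ c) h
    rwa [← zpow_add, ← zpow_add] at this
  -- derive le (z^3) 1 and le 1 (z^15)
  have h1 : le (z ^ (β+β+β + (α+α+α) + 9)) (z ^ ((α+1)+(α+1)+(α+1) + ((β+1)+(β+1)+(β+1)))) := by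
    have hlow := bYXZ.1
    rw [← id9] at hlow
    exact htrans _ _ _ hlow bXY.2
  have h2 : le (z ^ (α+α+α + (β+β+β))) (z ^ ((β+1)+(β+1)+(β+1) + ((α+1)+(α+1)+(α+1)) + 9)) := by
    have hup := bYXZ.2
    rw [← id9] at hup
    exact htrans _ _ _ bXY.1 hup
  have h3le : le (z ^ (3:ℤ)) 1 := by
    have := hshift _ _ (-(α+α+α+β+β+β+6)) h1
    have e : (β+β+β + (α+α+α) + 9) + (-(α+α+α+β+β+β+6)) = 3 := by ring
    have e' : ((α+1)+(α+1)+(α+1) + ((β+1)+(β+1)+(β+1))) + (-(α+α+α+β+β+β+6)) = 0 := by ring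
    rw [e, e'] at this
    simpa using this
  have h15ge : le 1 (z ^ (15:ℤ)) := by
    have := hshift _ _ (-(α+α+α+β+β+β)) h2
    have e : (α+α+α + (β+β+β)) + (-(α+α+α+β+β+β)) = 0 := by ring
    have e' : ((β+1)+(β+1)+(β+1) + ((α+1)+(α+1)+(α+1)) + 9) + (-(α+α+α+β+β+β)) = 15 := by ring
    rw [e, e'] at this
    simpa using this
  -- get le 1 (z^3)
  have ez1 : z ^ (1:ℤ) = z := zpow_one z
  have ez0 : z ^ (0:ℤ) = 1 := zpow_zero z
  have h30 : le (z ^ (3:ℤ)) (z ^ (0:ℤ)) := by rwa [ez0]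
  have step : ∀ k : ℤ, le (z ^ (k+3)) (z ^ k) := by
    intro k
    have := hshift 3 0 k h30
    simpa [add_comm] using this
  have h3ge : le 1 (z ^ (3:ℤ)) := by
    have c12 : le (z ^ (15:ℤ)) (z ^ (12:ℤ)) := step 12
    have c9 : le (z ^ (12:ℤ)) (z ^ (9:ℤ)) := step 9
    have c6 : le (z ^ (9:ℤ)) (z ^ (6:ℤ)) := step 6
    have c3 : le (z ^ (6:ℤ)) (z ^ (3:ℤ)) := step 3
    exact htrans _ _ _ h15ge (htrans _ _ _ c12 (htrans _ _ _ c9 (htrans _ _ _ c6 c3)))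
  -- z is equivalent to 1
  have hz1 : le z 1 ∧ le 1 z := by
    rcases htotal z 1 with h | h
    · refine ⟨h, ?_⟩
      have h' : le (z ^ (1:ℤ)) (z ^ (0:ℤ)) := by rw [ez1, ez0]; exact h
      have down : ∀ k : ℤ, le (z ^ (k+1)) (z ^ k) := by
        intro k
        have := hshift 1 0 k h'
        simpa [add_comm] using this
      have c1 : le (z ^ (3:ℤ)) (z ^ (2:ℤ)) := down 2
      have c2 : le (z ^ (2:ℤ)) (z ^ (1:ℤ)) := down 1
      have := htrans _ _ _ h3ge (htrans _ _ _ c1 c2)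
      rwa [ez1] at this
    · refine ⟨?_, h⟩
      have h' : le (z ^ (0:ℤ)) (z ^ (1:ℤ)) := by rw [ez1, ez0]; exact h
      have up : ∀ k : ℤ, le (z ^ k) (z ^ (k+1)) := by
        intro k
        have := hshift 0 1 k h'
        simpa [add_comm] using this
      have c1 : le (z ^ (1:ℤ)) (z ^ (2:ℤ)) := up 1
      have c2 : le (z ^ (2:ℤ)) (z ^ (3:ℤ)) := up 2
      have := htrans _ _ _ (htrans _ _ _ c1 c2) h3le
      rwa [ez1] at this
  -- every power of z is equivalent to 1
  have hpow : ∀ k : ℤ, le 1 (z ^ k) ∧ le (z ^ k) 1 := by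
    have up1 : ∀ k : ℤ, le (z ^ k) (z ^ (k+1)) := by
      intro k
      have h' : le (z ^ (0:ℤ)) (z ^ (1:ℤ)) := by rw [ez1, ez0]; exact hz1.2
      have := hshift 0 1 k h'
      simpa [add_comm] using this
    have down1 : ∀ k : ℤ, le (z ^ (k+1)) (z ^ k) := by
      intro k
      have h' : le (z ^ (1:ℤ)) (z ^ (0:ℤ)) := by rw [ez1, ez0]; exact hz1.1
      have := hshift 1 0 k h'
      simpa [add_comm] using this
    intro k
    induction k using Int.induction_on with
    | zero => rw [ez0]; exact ⟨hrefl 1, hrefl 1⟩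
    | succ n ih =>
        exact ⟨htrans _ _ _ ih.1 (up1 n), htrans _ _ _ (down1 n) ih.2⟩
    | pred n ih =>
        constructor
        · have := up1 (-n - 1)
          have e : (-n - 1) + 1 = -(n:ℤ) := by ring
          rw [e] at this
          exact htrans _ _ _ ih.1 (by
            have := down1 (-n - 1)
            rw [e] at this
            exact this)
        · have := up1 (-n - 1)
          have e : (-n - 1) + 1 = -(n:ℤ) := by ring
          rw [e] at this
          exact htrans _ _ _ this ih.2
  -- conclude
  have h1w : ∀ w : G, le 1 w := by
    intro w
    obtain ⟨k, hk1, _⟩ := harch w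
    exact htrans _ _ _ (hpow k).1 hk1
  intro u v
  have := hrinv _ _ u (h1w (v * u⁻¹))
  simpa using this
end

section
/- Let G be a group, z ∈ G, and let ≤ be a relation on G that is reflexive (u ≤ u for all u), total (for all u, v: u ≤ v or v ≤ u), transitive (u ≤ v and v ≤ w imply u ≤ w), and right-invariant (u ≤ v implies uw ≤ vw for all w). If z^(n^2) ≤ z^(2n) for every integer n, then z^(k₁) ≤ z^(k₂) for all integers k₁, k₂. -/
/-- If a reflexive, total, transitive, right-invariant relation on a group
satisfies `z^(n²) ≤ z^(2n)` for every integer `n`, then `z^(k₁) ≤ z^(k₂)`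
for all integers `k₁, k₂`. -/
theorem power_order_trivial {G : Type*} [Group G] (z : G)
    (le : G → G → Prop)
    (hrefl : ∀ u, le u u)
    (htotal : ∀ u v, le u v ∨ le v u)
    (htrans : ∀ u v w, le u v → le v w → le u w)
    (hrinv : ∀ u v w, le u v → le (u * w) (v * w))
    (hz : ∀ n : ℤ, le (z ^ (n ^ 2)) (z ^ (2 * n))) :
    ∀ k₁ k₂ : ℤ, le (z ^ k₁) (z ^ k₂) := by
  have key : ∀ n : ℤ, le (z ^ (n ^ 2 - 2 * n)) 1 := by
    intro n
    have h := hrinv _ _ (z ^ (-(2 * n))) (hz n)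
    rw [← zpow_add, ← zpow_add] at h
    simpa [sub_eq_add_neg] using h
  have hadd : ∀ a b : ℤ, le (z ^ a) 1 → le (z ^ b) 1 → le (z ^ (a + b)) 1 := by
    intro a b ha hb
    have h := hrinv _ _ (z ^ b) ha
    rw [one_mul, ← zpow_add] at h
    exact htrans _ _ _ h hb
  have hm1 : le (z ^ (-1 : ℤ)) 1 := by
    simpa only [show (1:ℤ)^2 - 2*1 = -1 by norm_num] using key 1
  have h3 : le (z ^ (3 : ℤ)) 1 := by
    simpa only [show (3:ℤ)^2 - 2*3 = 3 by norm_num] using key 3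
  have h1 : le (z ^ (1 : ℤ)) 1 := by
    simpa only [show ((3:ℤ) + -1) + -1 = 1 by norm_num] using
      hadd _ _ (hadd _ _ h3 hm1) hm1
  have hP : ∀ k : ℤ, le (z ^ k) 1 := by
    intro k
    induction k using Int.induction_on with
    | zero => simpa using hrefl 1
    | succ n ih => exact hadd _ _ ih h1
    | pred n ih => simpa [sub_eq_add_neg] using hadd _ _ ih hm1
  intro k₁ k₂
  have h := hrinv _ _ (z ^ k₂) (hP (k₁ - k₂))
  rw [one_mul, ← zpow_add, sub_add_cancel] at h
  exact h
end

section
/- Let α ∈ ℝ be irrational and k a nonzero integer. Let φ : ℝ × ℝ → ℝ be continuous such that for every x ∈ ℝ the map y ↦ φ(x, y) is a strictly increasing bijection of ℝ, and such that φ(x, y + 1) = φ(x, y) + 1 and φ(x + 1, y) = φ(x, y) + k for all x, y ∈ ℝ. Let T² = (ℝ/ℤ) × (ℝ/ℤ) with quotient map p : ℝ² → T², and let F : T² → T² be the map determined by F(p(x, y)) = p(x + α, φ(x, y)). Then F is topologically transitive: for any nonempty open sets U, V ⊆ T² there exists n ≥ 1 with Fⁿ(U) ∩ V ≠ ∅.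 -/
open Set Finset

private def phiN (α : ℝ) (φ : ℝ → ℝ → ℝ) : ℕ → ℝ → ℝ → ℝ
  | 0 => fun _ y => y
  | n+1 => fun x y => φ (x + n * α) (phiN α φ n x y)

private lemma coe_add_int' (x : ℝ) (j : ℤ) :
    ((x + j : ℝ) : AddCircle (1:ℝ)) = (x : AddCircle (1:ℝ)) := by
  have h : ((j : ℝ) : AddCircle (1:ℝ)) = 0 := by
    rw [AddCircle.coe_eq_zero_iff]; exact ⟨j, by simp⟩
  rw [AddCircle.coe_add, h, add_zero]

section
variable {α : ℝ} {φ : ℝ → ℝ → ℝ} {k : ℤ}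

private lemma phi_int (hφy : ∀ x y : ℝ, φ x (y + 1) = φ x y + 1) (x y : ℝ) (j : ℤ) :
    φ x (y + j) = φ x y + j := by
  induction j using Int.induction_on with
  | zero => simp
  | succ i ih => push_cast; rw [← add_assoc, hφy]; push_cast at ih; rw [ih]; ring
  | pred i ih =>
      have h1 := hφy x (y + (-(i:ℝ) - 1))
      have e : y + (-(i:ℝ) - 1) + 1 = y + -(i:ℝ) := by ring
      rw [e] at h1
      push_cast at ih ⊢
      linarith [h1, ih]

private lemma phiN_int (hφy : ∀ x y : ℝ, φ x (y + 1) = φ x y + 1) (n : ℕ) (x y : ℝ) (j : ℤ) :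
    phiN α φ n x (y + j) = phiN α φ n x y + j := by
  induction n with
  | zero => simp [phiN]
  | succ n ih => simp only [phiN, ih, phi_int hφy]

private lemma phiN_mono (hφmono : ∀ x : ℝ, StrictMono (φ x)) (n : ℕ) (x : ℝ) :
    Monotone (phiN α φ n x) := by
  induction n with
  | zero => exact fun a b h => h
  | succ n ih => exact fun a b h => ((hφmono _).monotone (ih h))

private lemma phiN_twist (hφy : ∀ x y : ℝ, φ x (y + 1) = φ x y + 1)
    (hφx : ∀ x y : ℝ, φ (x + 1) y = φ x y + k) (n : ℕ) (x y : ℝ) :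
    phiN α φ n (x + 1) y = phiN α φ n x y + n * k := by
  induction n with
  | zero => simp [phiN]
  | succ n ih =>
      show φ (x + 1 + n * α) _ = φ (x + n * α) _ + _
      rw [ih, show ((n:ℝ)*(k:ℝ)) = ((n*k : ℤ) : ℝ) by push_cast; ring,
        phi_int hφy, show x + 1 + (n:ℝ)*α = (x + (n:ℝ)*α) + 1 by ring, hφx]
      push_cast; ring

private lemma phiN_twist_int (hφy : ∀ x y : ℝ, φ x (y + 1) = φ x y + 1)
    (hφx : ∀ x y : ℝ, φ (x + 1) y = φ x y + k) (n : ℕ) (x y : ℝ) (j : ℤ) :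
    phiN α φ n (x + j) y = phiN α φ n x y + j * n * k := by
  induction j using Int.induction_on with
  | zero => simp
  | succ i ih =>
      have := phiN_twist (α := α) hφy hφx n (x + i) y
      push_cast at ih ⊢
      rw [show x + ((i:ℝ) + 1) = x + (i:ℝ) + 1 by ring, this, ih]; ring
  | pred i ih =>
      have h1 := phiN_twist (α := α) hφy hφx n (x + (-(i:ℝ) - 1)) y
      rw [show x + (-(i:ℝ) - 1) + 1 = x + -(i:ℝ) by ring] at h1
      push_cast at ih ⊢
      rw [show x + (-(i:ℝ) - 1) = x - (i:ℝ) - 1 by ring] at h1 ⊢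
      linarith [h1, ih]

private lemma phiN_cocycle (n m : ℕ) (x y : ℝ) :
    phiN α φ (m + n) x y = phiN α φ n (x + m * α) (phiN α φ m x y) := by
  induction n with
  | zero => simp [phiN]
  | succ n ih =>
      show φ (x + ((m+n : ℕ):ℝ) * α) (phiN α φ (m+n) x y)
          = φ (x + (m:ℝ) * α + (n:ℝ) * α) (phiN α φ n (x + (m:ℝ) * α) (phiN α φ m x y))
      rw [ih, show x + ((m+n : ℕ):ℝ) * α = x + (m:ℝ) * α + (n:ℝ) * α by push_cast; ring]

private lemma phiN_cont (hφcont : Continuous fun q : ℝ × ℝ => φ q.1 q.2) (n : ℕ) :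
    Continuous fun q : ℝ × ℝ => phiN α φ n q.1 q.2 := by
  induction n with
  | zero => exact continuous_snd
  | succ n ih =>
      exact hφcont.comp ((continuous_fst.add continuous_const).prodMk ih)

end

section
variable {α : ℝ}

private lemma small_step (hα : Irrational α) {δ : ℝ} (hδ : 0 < δ) :
    ∃ q : ℕ, 1 ≤ q ∧ ∃ j : ℤ, (q:ℝ) * α - j ≠ 0 ∧ |(q:ℝ) * α - j| ≤ δ := by
  obtain ⟨n, hn⟩ := exists_nat_gt (1/δ)
  have hnpos : 0 < n + 1 := Nat.succ_pos n
  obtain ⟨j, q, hq0, _, hq⟩ := Real.exists_int_int_abs_mul_sub_le α hnpos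
  have hqc : ((q.toNat : ℕ) : ℝ) = (q : ℝ) := by
    rw [show ((q.toNat : ℕ) : ℝ) = ((q.toNat : ℤ) : ℝ) by push_cast; ring,
      Int.toNat_of_nonneg hq0.le]
  refine ⟨q.toNat, by omega, j, ?_, ?_⟩
  · rw [hqc]
    intro h
    have hq0' : (q:ℝ) ≠ 0 := by positivity
    have hα2 : α = (j:ℝ) / (q:ℝ) := by
      rw [eq_div_iff hq0']; linear_combination h
    exact ((irrational_iff_ne_rational α).1 hα j q hq0.ne') hα2
  · rw [hqc]
    refine hq.trans ?_
    push_cast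
    rw [div_lt_iff₀ hδ] at hn
    rw [div_le_iff₀ (by positivity : (0:ℝ) < (n:ℝ) + 1 + 1)]
    nlinarith [hδ.le]

private lemma walk (x₀ u δ t : ℝ) (hδ : 0 < δ) (ht : t ≠ 0) (ht2 : |t| ≤ δ) :
    ∃ l : ℕ, ∃ i : ℤ, |x₀ + l * t - (u + i)| ≤ δ := by
  rcases ht.lt_or_gt with htn | htp
  · -- t < 0
    have habs : |t| = -t := abs_of_neg htn
    set i : ℤ := ⌊x₀ - u⌋ with hi
    have hui : u + i ≤ x₀ := by
      have := Int.floor_le (x₀ - u); linarith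
    have htp' : 0 < -t := by linarith
    set L : ℕ := ⌈(x₀ - (u + i)) / (-t)⌉₊ with hL
    refine ⟨L, i, ?_⟩
    have h1 : (x₀ - (u + i)) / (-t) ≤ L := Nat.le_ceil _
    have h1' : x₀ - (u + i) ≤ L * (-t) := (div_le_iff₀ htp').1 h1
    have h2 : (L:ℝ) < (x₀ - (u + i)) / (-t) + 1 :=
      Nat.ceil_lt_add_one (div_nonneg (by linarith) htp'.le)
    have h2' : ((L:ℝ) - 1) * (-t) < x₀ - (u + i) :=
      (lt_div_iff₀ htp').1 (by linarith)
    rw [abs_le]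
    constructor <;> nlinarith
  · -- t > 0
    have habs : |t| = t := abs_of_pos htp
    set i : ℤ := ⌈x₀ - u⌉ with hi
    have hui : x₀ ≤ u + i := by
      have := Int.le_ceil (x₀ - u); linarith
    set L : ℕ := ⌈((u + i) - x₀) / t⌉₊ with hL
    refine ⟨L, i, ?_⟩
    have h1 : ((u + i) - x₀) / t ≤ L := Nat.le_ceil _
    have h1' : (u + i) - x₀ ≤ L * t := (div_le_iff₀ htp).1 h1
    have h2 : (L:ℝ) < ((u + i) - x₀) / t + 1 :=
      Nat.ceil_lt_add_one (div_nonneg (by linarith) htp.le)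
    have h2' : ((L:ℝ) - 1) * t < (u + i) - x₀ :=
      (lt_div_iff₀ htp).1 (by linarith)
    rw [abs_le]
    constructor <;> nlinarith

private lemma forward_dense (hα : Irrational α) (x₀ u : ℝ) {δ : ℝ} (hδ : 0 < δ) :
    ∃ m : ℕ, ∃ i : ℤ, |x₀ + m * α - (u + i)| ≤ δ := by
  obtain ⟨q, hq1, j, htne, htle⟩ := small_step hα hδ
  obtain ⟨l, i, hl⟩ := walk x₀ u δ ((q:ℝ) * α - j) hδ htne htle
  refine ⟨l * q, i + l * j, ?_⟩
  have e : x₀ + ((l*q : ℕ) : ℝ) * α - (u + ((i + l*j : ℤ) : ℝ))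
      = x₀ + l * ((q:ℝ)*α - j) - (u + i) := by
    push_cast; ring
  rw [e]; exact hl

end



private lemma coe_cont : Continuous (fun s : ℝ => (s : AddCircle (1:ℝ))) :=
  AddCircle.continuous_mk' 1

private lemma coe_surj : Function.Surjective (fun s : ℝ => (s : AddCircle (1:ℝ))) :=
  QuotientAddGroup.mk'_surjective _

private lemma coe_open : IsOpenMap (fun s : ℝ => (s : AddCircle (1:ℝ))) :=
  QuotientAddGroup.isOpenMap_coe

private lemma box_open : IsOpenMap
    (fun q : ℝ × ℝ => ((q.1 : AddCircle (1:ℝ)), (q.2 : AddCircle (1:ℝ)))) :=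
  coe_open.prodMap coe_open

private lemma seg_in_open {O : Set (AddCircle (1:ℝ) × AddCircle (1:ℝ))} (hO : IsOpen O)
    {x y : ℝ} (hxy : ((x : AddCircle (1:ℝ)), (y : AddCircle (1:ℝ))) ∈ O) :
    ∃ δ : ℝ, 0 < δ ∧ ∀ s : ℝ, |s - x| ≤ δ →
      ((s : AddCircle (1:ℝ)), (y : AddCircle (1:ℝ))) ∈ O := by
  have hc : Continuous (fun s : ℝ => ((s : AddCircle (1:ℝ)), (y : AddCircle (1:ℝ)))) :=
    coe_cont.prodMk continuous_const
  have hopen : IsOpen ((fun s : ℝ => ((s : AddCircle (1:ℝ)), (y : AddCircle (1:ℝ)))) ⁻¹' O) :=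
    hO.preimage hc
  have hx : x ∈ (fun s : ℝ => ((s : AddCircle (1:ℝ)), (y : AddCircle (1:ℝ)))) ⁻¹' O := hxy
  obtain ⟨δ, hδ0, hδ⟩ := Metric.isOpen_iff.1 hopen x hx
  refine ⟨δ/2, by linarith, fun s hs => ?_⟩
  apply hδ
  rw [Metric.mem_ball, Real.dist_eq]
  linarith [hs]

section
variable {α : ℝ} {φ : ℝ → ℝ → ℝ} {k : ℤ}

private lemma main_osc (hα : Irrational α) (hk : k ≠ 0)
    (hφmono : ∀ x : ℝ, StrictMono (φ x))
    (hφy : ∀ x y : ℝ, φ x (y + 1) = φ x y + 1)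
    (hφx : ∀ x y : ℝ, φ (x + 1) y = φ x y + k)
    (T c a ε : ℝ) (hε : 0 < ε) :
    ∃ n : ℕ, 1 ≤ n ∧ ∃ x₁ ∈ Icc a (a+ε), ∃ x₂ ∈ Icc a (a+ε),
      T < phiN α φ n x₂ c - phiN α φ n x₁ c := by
  by_contra hcon
  push_neg at hcon
  have haI : a ∈ Icc a (a+ε) := ⟨le_refl a, by linarith⟩
  have hT0 : 0 ≤ T := by
    have := hcon 1 le_rfl a haI a haI; linarith
  have habs : ∀ n : ℕ, ∀ x₁ ∈ Icc a (a+ε), ∀ x₂ ∈ Icc a (a+ε),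
      |phiN α φ n x₂ c - phiN α φ n x₁ c| ≤ T := by
    intro n x₁ h₁ x₂ h₂
    match n with
    | 0 => simpa [phiN] using hT0
    | (n+1) =>
      rw [abs_le]
      constructor
      · have := hcon (n+1) (Nat.le_add_left 1 n) x₂ h₂ x₁ h₁; linarith
      · exact hcon (n+1) (Nat.le_add_left 1 n) x₁ h₁ x₂ h₂
  -- numerical setup
  obtain ⟨N, hNdef⟩ : ∃ N : ℕ, N = ⌈2/ε⌉₊ + 1 := ⟨_, rfl⟩
  have hN0 : (0:ℝ) < N := by rw [hNdef]; positivity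
  have hNε : 1/(N:ℝ) ≤ ε/2 := by
    have h1 : 2/ε ≤ (N:ℝ) := by
      have := Nat.le_ceil (2/ε)
      rw [hNdef]; push_cast; linarith
    rw [div_le_div_iff₀ hN0 (by norm_num : (0:ℝ) < 2)]
    rw [div_le_iff₀ hε] at h1
    linarith
  obtain ⟨P, hPdef⟩ : ∃ P : ℤ, P = ⌈T⌉ := ⟨_, rfl⟩
  have hPT : T ≤ P := hPdef ▸ Int.le_ceil T
  have hPT' : (P:ℝ) < T + 1 := by
    have := Int.ceil_lt_add_one T
    rw [hPdef]; push_cast; push_cast at this; linarith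
  obtain ⟨n', hn'def⟩ : ∃ n' : ℕ, n' = N * (3 * ⌈T⌉₊ + 5) := ⟨_, rfl⟩
  have hn'1 : 1 ≤ n' := by
    rw [hn'def, hNdef]; exact Nat.one_le_iff_ne_zero.2 (Nat.mul_ne_zero (by omega) (by omega))
  have hkabs : (1:ℝ) ≤ |(k:ℝ)| := by
    have h : (1:ℤ) ≤ |k| := Int.one_le_abs hk
    calc (1:ℝ) ≤ ((|k| : ℤ) : ℝ) := by exact_mod_cast h
    _ = |(k:ℝ)| := by push_cast; ring
  have hQ : 3*T + 5 ≤ (n':ℝ) * |(k:ℝ)| / N := by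
    have e : (n':ℝ) = (N:ℝ) * (3 * (⌈T⌉₊:ℝ) + 5) := by rw [hn'def]; push_cast; ring
    rw [e, le_div_iff₀ hN0]
    have h2 : T ≤ (⌈T⌉₊:ℝ) := Nat.le_ceil T
    nlinarith [hN0, h2, hkabs, hT0]
  -- telescoping
  have htel := Finset.sum_range_sub (fun i : ℕ => phiN α φ n' ((i:ℝ)/N) c) N
  have hfN : phiN α φ n' (((N:ℕ):ℝ)/N) c - phiN α φ n' (((0:ℕ):ℝ)/N) c = (n':ℝ) * k := by
    have e1 : ((N:ℝ))/N = 0 + 1 := by field_simp; norm_num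
    have e0 : ((0:ℕ):ℝ)/N = 0 := by norm_num
    rw [e1, e0, phiN_twist hφy hφx]; ring
  have hbig : ∃ i, i < N ∧
      (n':ℝ) * |(k:ℝ)| / N ≤ |phiN α φ n' (((i+1:ℕ):ℝ)/N) c - phiN α φ n' (((i:ℕ):ℝ)/N) c| := by
    by_contra hsmall
    push_neg at hsmall
    have h1 : |∑ i ∈ range N, (phiN α φ n' (((i+1:ℕ):ℝ)/N) c - phiN α φ n' (((i:ℕ):ℝ)/N) c)|
        ≤ ∑ i ∈ range N, |phiN α φ n' (((i+1:ℕ):ℝ)/N) c - phiN α φ n' (((i:ℕ):ℝ)/N) c| :=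
      Finset.abs_sum_le_sum_abs _ _
    have hne : (range N).Nonempty := Finset.nonempty_range_iff.2 (by rw [hNdef]; omega)
    have h2 := Finset.sum_lt_sum_of_nonempty hne
      (f := fun i : ℕ => |phiN α φ n' (((i+1:ℕ):ℝ)/N) c - phiN α φ n' (((i:ℕ):ℝ)/N) c|)
      (g := fun _ : ℕ => (n':ℝ) * |(k:ℝ)| / N)
      (fun i hi => hsmall i (Finset.mem_range.1 hi))
    rw [Finset.sum_const, Finset.card_range, nsmul_eq_mul] at h2
    have e : (N:ℝ) * ((n':ℝ) * |(k:ℝ)| / N) = (n':ℝ) * |(k:ℝ)| := by field_simp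
    rw [e] at h2
    rw [htel, hfN] at h1
    have habsk : |(n':ℝ) * (k:ℝ)| = (n':ℝ) * |(k:ℝ)| := by
      rw [abs_mul, abs_of_nonneg (by positivity : (0:ℝ) ≤ (n':ℝ))]
    rw [habsk] at h1
    linarith
  obtain ⟨i, hiN, hbig⟩ := hbig
  obtain ⟨u₁, hu₁⟩ : ∃ u : ℝ, u = ((i:ℕ):ℝ)/N := ⟨_, rfl⟩
  obtain ⟨u₂, hu₂⟩ : ∃ u : ℝ, u = ((i+1:ℕ):ℝ)/N := ⟨_, rfl⟩
  rw [← hu₁, ← hu₂] at hbig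
  have hu21 : u₂ - u₁ = 1/N := by rw [hu₁, hu₂]; push_cast; field_simp; ring
  -- position the interval
  have h1N : (0:ℝ) ≤ 1/N := by positivity
  have hρ : (0:ℝ) < (ε - 1/N)/2 := by linarith
  obtain ⟨m, i', hm⟩ := forward_dense hα a ((u₂ - ε + u₁)/2) hρ
  rw [abs_le] at hm
  have hβ1 : u₂ - ε ≤ a + m * α - i' := by linarith [hm.1]
  have hβ2 : a + m * α - i' ≤ u₁ := by linarith [hm.2]
  obtain ⟨x₁, hx₁⟩ : ∃ x : ℝ, x = u₁ - m * α + i' := ⟨_, rfl⟩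
  obtain ⟨x₂, hx₂⟩ : ∃ x : ℝ, x = u₂ - m * α + i' := ⟨_, rfl⟩
  have hx₁I : x₁ ∈ Icc a (a+ε) := by
    rw [hx₁]; constructor
    · linarith
    · linarith
  have hx₂I : x₂ ∈ Icc a (a+ε) := by
    rw [hx₂]; constructor
    · linarith
    · linarith
  -- the composition estimate
  obtain ⟨n, hn⟩ : ∃ n : ℕ, n = m + n' := ⟨_, rfl⟩
  obtain ⟨y₁, hy₁⟩ : ∃ y : ℝ, y = phiN α φ m x₁ c := ⟨_, rfl⟩
  obtain ⟨y₂, hy₂⟩ : ∃ y : ℝ, y = phiN α φ m x₂ c := ⟨_, rfl⟩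
  have hyT : |y₂ - y₁| ≤ T := by rw [hy₁, hy₂]; exact habs m x₁ hx₁I x₂ hx₂I
  rw [abs_le] at hyT
  obtain ⟨j', hj'⟩ : ∃ j : ℤ, j = ⌊y₁ - c⌋ := ⟨_, rfl⟩
  have hy₁bl : c + (j':ℝ) ≤ y₁ := by
    have := Int.floor_le (y₁ - c); rw [← hj'] at this; linarith
  have hy₁br : y₁ ≤ c + (j':ℝ) + 1 := by
    have := Int.lt_floor_add_one (y₁ - c); rw [← hj'] at this; linarith
  -- band bounds for both y's
  have hband : ∀ u : ℝ, ∀ y : ℝ, (y = y₁ ∨ y = y₂) →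
      phiN α φ n' u c + ((j':ℝ) - P) ≤ phiN α φ n' u y ∧
      phiN α φ n' u y ≤ phiN α φ n' u c + ((j':ℝ) + 1 + P) := by
    intro u y hy
    have hyl : c + ((j' - P : ℤ):ℝ) ≤ y := by
      push_cast
      rcases hy with rfl | rfl
      · linarith
      · linarith
    have hyr : y ≤ c + ((j' + 1 + P : ℤ):ℝ) := by
      push_cast
      rcases hy with rfl | rfl
      · linarith
      · linarith
    constructor
    · have h := phiN_mono (α := α) hφmono n' u hyl
      rw [phiN_int hφy] at h
      push_cast at h; linarith
    · have h := phiN_mono (α := α) hφmono n' u hyr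
      rw [phiN_int hφy] at h
      push_cast at h; linarith
  have hcomp : ∀ (x u : ℝ), x + m * α = u + i' →
      phiN α φ n x c = phiN α φ n' u (phiN α φ m x c) + (i':ℝ) * n' * k := by
    intro x u hxu
    rw [hn, phiN_cocycle, hxu, phiN_twist_int hφy hφx]
  have hc₁ : phiN α φ n x₁ c = phiN α φ n' u₁ y₁ + (i':ℝ) * n' * k := by
    rw [hy₁]; exact hcomp x₁ u₁ (by rw [hx₁]; ring)
  have hc₂ : phiN α φ n x₂ c = phiN α φ n' u₂ y₂ + (i':ℝ) * n' * k := by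
    rw [hy₂]; exact hcomp x₂ u₂ (by rw [hx₂]; ring)
  have hb₁ := hband u₁ y₁ (Or.inl rfl)
  have hb₂ := hband u₂ y₂ (Or.inr rfl)
  have hd : phiN α φ n x₂ c - phiN α φ n x₁ c
      = phiN α φ n' u₂ y₂ - phiN α φ n' u₁ y₁ := by rw [hc₁, hc₂]; ring
  have habsn := habs n x₁ hx₁I x₂ hx₂I
  rw [abs_le] at habsn
  rcases le_or_gt 0 (phiN α φ n' u₂ c - phiN α φ n' u₁ c) with hdpos | hdneg
  · rw [abs_of_nonneg hdpos] at hbig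
    linarith [hb₁.2, hb₂.1, habsn.2, hQ, hPT', hd]
  · rw [abs_of_neg hdneg] at hbig
    linarith [hb₁.1, hb₂.2, habsn.1, hQ, hPT', hd]
end


/-- A skew product over an irrational rotation of the circle which is
homotopic to a nontrivial Dehn twist (twisting number `k ≠ 0`) is
topologically transitive on the 2-torus. -/
theorem dehn_twist_skew_product_transitive
    (α : ℝ) (hα : Irrational α) (k : ℤ) (hk : k ≠ 0)
    (φ : ℝ → ℝ → ℝ)
    (hφcont : Continuous fun q : ℝ × ℝ => φ q.1 q.2)
    (hφmono : ∀ x : ℝ, StrictMono (φ x))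
    (hφbij : ∀ x : ℝ, Function.Bijective (φ x))
    (hφy : ∀ x y : ℝ, φ x (y + 1) = φ x y + 1)
    (hφx : ∀ x y : ℝ, φ (x + 1) y = φ x y + k)
    (F : AddCircle (1 : ℝ) × AddCircle (1 : ℝ) →
         AddCircle (1 : ℝ) × AddCircle (1 : ℝ))
    (hF : ∀ x y : ℝ, F (↑x, ↑y) = (↑(x + α), ↑(φ x y))) :
    ∀ U V : Set (AddCircle (1 : ℝ) × AddCircle (1 : ℝ)),
      IsOpen U → U.Nonempty → IsOpen V → V.Nonempty →
      ∃ n : ℕ, 1 ≤ n ∧ ((F^[n] '' U) ∩ V).Nonempty := by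
  intro U V hU hUne hV hVne
  -- iterate formula
  have hiter : ∀ (n : ℕ) (x y : ℝ), F^[n] ((x : AddCircle (1:ℝ)), (y : AddCircle (1:ℝ)))
      = (((x + n * α : ℝ) : AddCircle (1:ℝ)), ((phiN α φ n x y : ℝ) : AddCircle (1:ℝ))) := by
    intro n
    induction n with
    | zero => intro x y; simp [phiN]
    | succ n ih =>
        intro x y
        rw [Function.iterate_succ_apply', ih, hF]
        refine Prod.ext ?_ rfl
        show ((x + n * α + α : ℝ) : AddCircle (1:ℝ)) = ((x + ((n+1 : ℕ):ℝ) * α : ℝ) : AddCircle (1:ℝ))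
        congr 1; push_cast; ring
  -- the forward orbit of U
  set W : Set (AddCircle (1:ℝ) × AddCircle (1:ℝ)) := ⋃ n : ℕ, F^[n+1] '' U with hWdef
  have hWinv : ∀ w ∈ W, F w ∈ W := by
    intro w hw
    rw [hWdef, Set.mem_iUnion] at hw ⊢
    obtain ⟨n, z, hz, rfl⟩ := hw
    exact ⟨n+1, z, hz, Function.iterate_succ_apply' F (n+1) z⟩
  -- a horizontal segment inside U
  obtain ⟨u0, hu0⟩ := hUne
  obtain ⟨xb, hxb⟩ := coe_surj u0.1
  obtain ⟨yb, hyb⟩ := coe_surj u0.2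
  have hu0' : ((xb : AddCircle (1:ℝ)), (yb : AddCircle (1:ℝ))) ∈ U := by
    have : ((xb : AddCircle (1:ℝ)), (yb : AddCircle (1:ℝ))) = u0 := Prod.ext hxb hyb
    rw [this]; exact hu0
  obtain ⟨δ₀, hδ₀, hseg⟩ := seg_in_open hU hu0'
  -- for each j, a long curve in the (n j)-th image of the segment
  have key : ∀ j : ℕ, ∃ n : ℕ, 1 ≤ n ∧ ∀ t : ℝ, ∃ s : ℝ,
      xb ≤ s ∧ s ≤ xb + min δ₀ (1/((j:ℝ)+1)) ∧ ∃ i : ℤ, phiN α φ n s yb = t + i := by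
    intro j
    have hεpos : 0 < min δ₀ (1/((j:ℝ)+1)) := lt_min hδ₀ (by positivity)
    obtain ⟨n, hn1, x₁, hx₁, x₂, hx₂, hgt⟩ :=
      main_osc hα hk hφmono hφy hφx 1 yb xb _ hεpos
    refine ⟨n, hn1, fun t => ?_⟩
    have hle : phiN α φ n x₁ yb ≤ phiN α φ n x₂ yb := by linarith
    have hcont : ContinuousOn (fun x : ℝ => phiN α φ n x yb) (Set.uIcc x₁ x₂) :=
      ((phiN_cont hφcont n).comp (continuous_id.prodMk continuous_const)).continuousOn
    have hiv := intermediate_value_uIcc hcont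
    have hmem : t + ((⌈phiN α φ n x₁ yb - t⌉ : ℤ) : ℝ)
        ∈ Set.uIcc (phiN α φ n x₁ yb) (phiN α φ n x₂ yb) := by
      rw [Set.uIcc_of_le hle]
      constructor
      · linarith [Int.le_ceil (phiN α φ n x₁ yb - t)]
      · linarith [Int.ceil_lt_add_one (phiN α φ n x₁ yb - t)]
    obtain ⟨s, hs, hgs⟩ := hiv hmem
    have hsI : s ∈ Set.Icc xb (xb + min δ₀ (1/((j:ℝ)+1))) := Set.uIcc_subset_Icc hx₁ hx₂ hs
    exact ⟨s, hsI.1, hsI.2, ⌈phiN α φ n x₁ yb - t⌉, hgs⟩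
  choose nf hnf1 hrest using key
  choose sf hsf1 hsf2 jf hjf using hrest
  -- the constructed points lie in W
  have hWpt : ∀ (j : ℕ) (t : ℝ),
      (((sf j t + nf j * α : ℝ) : AddCircle (1:ℝ)), (t : AddCircle (1:ℝ))) ∈ W := by
    intro j t
    have hsU : ((sf j t : AddCircle (1:ℝ)), (yb : AddCircle (1:ℝ))) ∈ U := by
      apply hseg
      rw [abs_le]
      have h1 := hsf1 j t
      have h2 := hsf2 j t
      have h3 : min δ₀ (1/((j:ℝ)+1)) ≤ δ₀ := min_le_left _ _
      constructor <;> linarith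
    have hit := hiter (nf j) (sf j t) yb
    rw [hjf j t, coe_add_int'] at hit
    rw [hWdef, Set.mem_iUnion]
    have hnn : nf j - 1 + 1 = nf j := by have := hnf1 j; omega
    exact ⟨nf j - 1, ((sf j t : AddCircle (1:ℝ)), (yb : AddCircle (1:ℝ))), hsU, by rw [hnn, hit]⟩
  -- extract a limit base point x₀
  obtain ⟨x₀, hx₀I, σ, hσ, hθtend⟩ :=
    (isCompact_Icc (a := (0:ℝ)) (b := 1)).tendsto_subseq
      (x := fun j : ℕ => Int.fract (xb + nf j * α))
      (fun j => ⟨Int.fract_nonneg _, (Int.fract_lt_one _).le⟩)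
  -- the whole fiber over x₀ is in the closure of W
  have hfiber0 : ∀ t : ℝ, ((x₀ : AddCircle (1:ℝ)), (t : AddCircle (1:ℝ))) ∈ closure W := by
    intro t
    rw [mem_closure_iff]
    intro O hO hmem
    obtain ⟨δ, hδ0, hOseg⟩ := seg_in_open hO hmem
    obtain ⟨J1, hJ1⟩ := Metric.tendsto_atTop.1 hθtend (δ/2) (by linarith)
    obtain ⟨J2, hJ2⟩ := exists_nat_gt (2/δ)
    set j := max J1 J2 with hj
    set l := σ j with hl
    have hl1 : |Int.fract (xb + nf l * α) - x₀| ≤ δ/2 := by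
      have := hJ1 j (le_max_left _ _)
      rw [Real.dist_eq] at this
      exact this.le
    have hl2 : 1/((l:ℝ)+1) ≤ δ/2 := by
      have hjl : (J2 : ℝ) ≤ (l:ℝ) := by
        have h1 : j ≤ σ j := hσ.le_apply
        have h2 : J2 ≤ j := le_max_right _ _
        exact_mod_cast le_trans h2 h1
      rw [div_le_div_iff₀ (by positivity) (by norm_num : (0:ℝ) < 2)]
      rw [div_lt_iff₀ hδ0] at hJ2
      nlinarith [hδ0.le]
    have hWp := hWpt l t
    have hcoe : ((sf l t + nf l * α : ℝ) : AddCircle (1:ℝ))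
        = ((sf l t - xb + Int.fract (xb + nf l * α) : ℝ) : AddCircle (1:ℝ)) := by
      have e : (sf l t + nf l * α : ℝ)
          = (sf l t - xb + Int.fract (xb + nf l * α)) + (⌊xb + nf l * α⌋ : ℤ) := by
        have hff := Int.floor_add_fract (xb + nf l * α)
        linarith
      rw [e, coe_add_int']
    rw [hcoe] at hWp
    refine ⟨_, hOseg (sf l t - xb + Int.fract (xb + nf l * α)) ?_, hWp⟩
    have h1 := hsf1 l t
    have h2 := hsf2 l t
    have h3 : min δ₀ (1/((l:ℝ)+1)) ≤ 1/((l:ℝ)+1) := min_le_right _ _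
    rw [abs_le] at hl1 ⊢
    constructor <;> linarith [hl1.1, hl1.2]
  -- pushing a full fiber forward by one step
  have hstep : ∀ x : ℝ, (∀ t : ℝ, ((x : AddCircle (1:ℝ)), (t : AddCircle (1:ℝ))) ∈ closure W) →
      ∀ t : ℝ, (((x + α : ℝ) : AddCircle (1:ℝ)), (t : AddCircle (1:ℝ))) ∈ closure W := by
    intro x hx t
    obtain ⟨t0, ht0⟩ := (hφbij x).2 t
    rw [mem_closure_iff]
    intro O hO hmem
    have hGc : Continuous (fun q : ℝ × ℝ =>
        (((q.1 + α : ℝ) : AddCircle (1:ℝ)), ((φ q.1 q.2 : ℝ) : AddCircle (1:ℝ)))) :=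
      (coe_cont.comp (continuous_fst.add continuous_const)).prodMk (coe_cont.comp hφcont)
    have hpre : IsOpen ((fun q : ℝ × ℝ =>
        (((q.1 + α : ℝ) : AddCircle (1:ℝ)), ((φ q.1 q.2 : ℝ) : AddCircle (1:ℝ)))) ⁻¹' O) :=
      hO.preimage hGc
    have hmem' : (x, t0) ∈ (fun q : ℝ × ℝ =>
        (((q.1 + α : ℝ) : AddCircle (1:ℝ)), ((φ q.1 q.2 : ℝ) : AddCircle (1:ℝ)))) ⁻¹' O := by
      show (((x + α : ℝ) : AddCircle (1:ℝ)), ((φ x t0 : ℝ) : AddCircle (1:ℝ))) ∈ O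
      rw [ht0]; exact hmem
    obtain ⟨δ, hδ0, hball⟩ := Metric.isOpen_iff.1 hpre (x, t0) hmem'
    have hBopen : IsOpen ((fun q : ℝ × ℝ =>
        ((q.1 : AddCircle (1:ℝ)), (q.2 : AddCircle (1:ℝ)))) '' Metric.ball (x, t0) δ) :=
      box_open _ Metric.isOpen_ball
    have hBmem : ((x : AddCircle (1:ℝ)), (t0 : AddCircle (1:ℝ)))
        ∈ (fun q : ℝ × ℝ => ((q.1 : AddCircle (1:ℝ)), (q.2 : AddCircle (1:ℝ)))) ''
          Metric.ball (x, t0) δ :=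
      ⟨(x, t0), Metric.mem_ball_self hδ0, rfl⟩
    obtain ⟨w, hwB, hwW⟩ := mem_closure_iff.1 (hx t0) _ hBopen hBmem
    obtain ⟨⟨x', t'⟩, hq, rfl⟩ := hwB
    refine ⟨F ((x' : AddCircle (1:ℝ)), (t' : AddCircle (1:ℝ))), ?_, hWinv _ hwW⟩
    rw [hF]
    exact hball hq
  -- induction along the rotation orbit
  have hfiber : ∀ (m : ℕ) (t : ℝ),
      (((x₀ + m * α : ℝ) : AddCircle (1:ℝ)), (t : AddCircle (1:ℝ))) ∈ closure W := by
    intro m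
    induction m with
    | zero => intro t; simpa using hfiber0 t
    | succ m ih =>
        intro t
        have h := hstep (x₀ + m * α) ih t
        have e : (x₀ + m * α + α : ℝ) = x₀ + ((m+1 : ℕ):ℝ) * α := by push_cast; ring
        rw [e] at h
        exact h
  -- conclude via density of the rotation orbit
  obtain ⟨v0, hv0⟩ := hVne
  obtain ⟨ub, hub⟩ := coe_surj v0.1
  obtain ⟨vb, hvb⟩ := coe_surj v0.2
  have hv0' : ((ub : AddCircle (1:ℝ)), (vb : AddCircle (1:ℝ))) ∈ V := by
    have : ((ub : AddCircle (1:ℝ)), (vb : AddCircle (1:ℝ))) = v0 := Prod.ext hub hvb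
    rw [this]; exact hv0
  obtain ⟨δv, hδv, hsegV⟩ := seg_in_open hV hv0'
  obtain ⟨m, i, hmi⟩ := forward_dense hα x₀ ub hδv
  have hPt : (((x₀ + m * α : ℝ) : AddCircle (1:ℝ)), (vb : AddCircle (1:ℝ))) ∈ V := by
    have e : ((x₀ + m * α : ℝ) : AddCircle (1:ℝ))
        = ((x₀ + m * α - i : ℝ) : AddCircle (1:ℝ)) := by
      rw [show (x₀ + m * α : ℝ) = (x₀ + m * α - i) + i by ring, coe_add_int']; congr 1; ring
    rw [e]
    apply hsegV
    rw [abs_le] at hmi ⊢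
    constructor <;> linarith [hmi.1, hmi.2]
  obtain ⟨w, hwV, hwW⟩ := mem_closure_iff.1 (hfiber m vb) V hV hPt
  rw [hWdef, Set.mem_iUnion] at hwW
  obtain ⟨n, hw⟩ := hwW
  exact ⟨n+1, by omega, w, hw, hwV⟩
end
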